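/- Let z and complex points t_{c} for c in a finite list be pairwise distinct, and fix two adjacent candidate positions for two indices x and y. Define ζ_{(c_N,...,c_1)}(z) = ∏_{k=2}^N 1/(c_k − c_{k-1}) · 1/(c_1 − z). View ζ_I(z) as a rational function of s = t_x with all other points fixed. Then: (1) if I = I'' x y I' (x immediately to the left of y), lim_{s→t_y} (s − t_y) ζ_I(z) = ζ_{I'' y I'}(z); (2) if I = I'' y x I' (x immediately to the right of y), lim_{s→t_y} (s − t_y) ζ_I(z) = −ζ_{I'' y I'}(z); (3) if x and y are not adjacent in I (or x does not occur in I), the limit lim_{s→t_y} (s − t_y) ζ_I(z) = 0. -/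

import Mathlib

open Filter

/-- `zeta [c_N,...,c_1] z = (∏_{k=2}^N 1/(c_k - c_{k-1})) · 1/(c_1 - z)`, `zeta [] z = 1`. -/
noncomputable def zeta : List ℂ → ℂ → ℂ
  | [], _ => 1
  | [a], z => (a - z)⁻¹
  | a :: b :: rest, z => (a - b)⁻¹ * zeta (b :: rest) z

/-- chain of inverse differences along `P` ended at `a`. -/
noncomputable def chain : List ℂ → ℂ → ℂ
  | [], _ => 1
  | [b], a => (b - a)⁻¹
  | b :: c :: rest, a => (b - c)⁻¹ * chain (c :: rest) a

lemma mem_of_getLast?' : ∀ {l : List ℂ} {a : ℂ}, l.getLast? = some a → a ∈ l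
  | [b], a, h => by simp_all
  | b :: c :: t, a, h => by
      rw [List.getLast?_cons_cons] at h
      exact List.mem_cons_of_mem _ (mem_of_getLast?' h)

lemma zeta_split (z : ℂ) : ∀ (P : List ℂ) (a : ℂ) (Q : List ℂ),
    zeta (P ++ a :: Q) z = chain P a * zeta (a :: Q) z
  | [], a, Q => by simp [chain]
  | [b], a, Q => by simp [zeta, chain]
  | b :: c :: rest, a, Q => by
      have ih := zeta_split z (c :: rest) a Q
      simp only [List.cons_append] at ih ⊢
      rw [zeta, ih, chain]
      ring

lemma chain_contAt (ty : ℂ) : ∀ (P : List ℂ), P.getLast? ≠ some ty →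
    ContinuousAt (fun s => chain P s) ty
  | [], _ => by simpa [chain] using (continuousAt_const : ContinuousAt (fun _ : ℂ => (1:ℂ)) ty)
  | [b], h => by
      have hb : b ≠ ty := by simpa using h
      have : ContinuousAt (fun s : ℂ => (b - s)⁻¹) ty :=
        (continuousAt_const.sub continuousAt_id).inv₀ (sub_ne_zero.mpr hb)
      simpa [chain] using this
  | b :: c :: rest, h => by
      have h' : (c :: rest).getLast? ≠ some ty := by
        simpa [List.getLast?_cons_cons] using h
      have := chain_contAt ty (c :: rest) h'
      simp only [chain]
      exact continuousAt_const.mul this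

lemma zeta_cons_contAt (z ty : ℂ) (Q : List ℂ) (hz : ty ≠ z) (hQ : Q.head? ≠ some ty) :
    ContinuousAt (fun s => zeta (s :: Q) z) ty := by
  cases Q with
  | nil =>
      have : ContinuousAt (fun s : ℂ => (s - z)⁻¹) ty :=
        (continuousAt_id.sub continuousAt_const).inv₀ (sub_ne_zero.mpr hz)
      simpa [zeta] using this
  | cons b Q' =>
      have hb : ty ≠ b := by
        intro h; exact hQ (by simp [h])
      have : ContinuousAt (fun s : ℂ => (s - b)⁻¹ * zeta (b :: Q') z) ty :=
        ((continuousAt_id.sub continuousAt_const).inv₀ (sub_ne_zero.mpr hb)).mul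
          continuousAt_const
      simpa [zeta] using this

lemma tendsto_sub_zero (ty : ℂ) :
    Tendsto (fun s : ℂ => s - ty) (nhdsWithin ty {ty}ᶜ) (nhds 0) := by
  have : Tendsto (fun s : ℂ => s - ty) (nhds ty) (nhds (ty - ty)) :=
    (continuous_id.sub continuous_const).tendsto ty
  simpa using this.mono_left nhdsWithin_le_nhds

theorem diagonal_residue (z ty : ℂ) :
    (∀ P Q : List ℂ, (z :: ty :: (P ++ Q)).Pairwise (· ≠ ·) →
        Tendsto (fun s : ℂ => (s - ty) * zeta (P ++ s :: ty :: Q) z)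
          (nhdsWithin ty {ty}ᶜ) (nhds (zeta (P ++ ty :: Q) z))) ∧
      (∀ P Q : List ℂ, (z :: ty :: (P ++ Q)).Pairwise (· ≠ ·) →
        Tendsto (fun s : ℂ => (s - ty) * zeta (P ++ ty :: s :: Q) z)
          (nhdsWithin ty {ty}ᶜ) (nhds (-zeta (P ++ ty :: Q) z))) ∧
      (∀ P Q : List ℂ, (z :: (P ++ Q)).Pairwise (· ≠ ·) → ty ≠ z →
        P.getLast? ≠ some ty → Q.head? ≠ some ty →
        Tendsto (fun s : ℂ => (s - ty) * zeta (P ++ s :: Q) z)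
          (nhdsWithin ty {ty}ᶜ) (nhds 0)) ∧
      (∀ L : List ℂ, (z :: L).Pairwise (· ≠ ·) →
        Tendsto (fun s : ℂ => (s - ty) * zeta L z)
          (nhdsWithin ty {ty}ᶜ) (nhds 0)) := by
  refine ⟨?_, ?_, ?_, ?_⟩
  · -- (1)
    intro P Q h
    rw [List.pairwise_cons] at h
    obtain ⟨hz, h⟩ := h
    rw [List.pairwise_cons] at h
    obtain ⟨hty, _⟩ := h
    have hzty : ty ≠ z := fun hh => (hz ty (by simp)) hh.symm
    have hP : P.getLast? ≠ some ty := by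
      intro hh
      have : ty ∈ P := mem_of_getLast?' hh
      exact (hty ty (List.mem_append_left _ this)) rfl
    have key : ∀ᶠ s in nhdsWithin ty {ty}ᶜ,
        chain P s * zeta (ty :: Q) z = (s - ty) * zeta (P ++ s :: ty :: Q) z := by
      filter_upwards [self_mem_nhdsWithin] with s hs
      have hsty : (s : ℂ) - ty ≠ 0 := sub_ne_zero.mpr hs
      rw [zeta_split z P s (ty :: Q)]
      show chain P s * zeta (ty :: Q) z = (s - ty) * (chain P s * ((s - ty)⁻¹ * zeta (ty :: Q) z))
      field_simp
    have hcont : Tendsto (fun s => chain P s * zeta (ty :: Q) z)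
        (nhdsWithin ty {ty}ᶜ) (nhds (chain P ty * zeta (ty :: Q) z)) :=
      (((chain_contAt ty P hP).mul continuousAt_const)).tendsto.mono_left nhdsWithin_le_nhds
    rw [zeta_split z P ty Q]
    exact hcont.congr' key
  · -- (2)
    intro P Q h
    rw [List.pairwise_cons] at h
    obtain ⟨hz, h⟩ := h
    rw [List.pairwise_cons] at h
    obtain ⟨hty, _⟩ := h
    have hzty : ty ≠ z := fun hh => (hz ty (by simp)) hh.symm
    have hQ : Q.head? ≠ some ty := by
      intro hh
      have : ty ∈ Q := List.mem_of_mem_head? (by simp [hh])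
      exact (hty ty (List.mem_append_right _ this)) rfl
    have key : ∀ᶠ s in nhdsWithin ty {ty}ᶜ,
        -(chain P ty * zeta (s :: Q) z) = (s - ty) * zeta (P ++ ty :: s :: Q) z := by
      filter_upwards [self_mem_nhdsWithin] with s hs
      have hsty : ty - (s : ℂ) ≠ 0 := sub_ne_zero.mpr (Ne.symm hs)
      rw [zeta_split z P ty (s :: Q)]
      show -(chain P ty * zeta (s :: Q) z)
          = (s - ty) * (chain P ty * ((ty - s)⁻¹ * zeta (s :: Q) z))
      field_simp
      ring
    have hcont : Tendsto (fun s => -(chain P ty * zeta (s :: Q) z))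
        (nhdsWithin ty {ty}ᶜ) (nhds (-(chain P ty * zeta (ty :: Q) z))) :=
      ((continuousAt_const.mul (zeta_cons_contAt z ty Q hzty hQ)).neg).tendsto.mono_left
        nhdsWithin_le_nhds
    rw [zeta_split z P ty Q]
    exact hcont.congr' key
  · -- (3)
    intro P Q _ hz hP hQ
    have hcont : Tendsto (fun s => chain P s * zeta (s :: Q) z)
        (nhdsWithin ty {ty}ᶜ) (nhds (chain P ty * zeta (ty :: Q) z)) :=
      ((chain_contAt ty P hP).mul (zeta_cons_contAt z ty Q hz hQ)).tendsto.mono_left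
        nhdsWithin_le_nhds
    have := (tendsto_sub_zero ty).mul hcont
    simp only [zero_mul] at this
    simpa only [zeta_split] using this
  · -- (4)
    intro L _
    have := (tendsto_sub_zero ty).mul
      (tendsto_const_nhds : Tendsto (fun _ : ℂ => zeta L z) (nhdsWithin ty {ty}ᶜ) _)
    simpa using this
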